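/- (Interpolation inequality.) Let α ∈ (0,1) and f: [τ₀,τ] → ℝᵈ be α-Hölder continuous. Then ‖f‖_∞ ≤ 2√d · max{ (τ−τ₀)^{−1/2} ‖f‖_{L_2([τ₀,τ],ℝᵈ)}, ‖f‖_{L_2([τ₀,τ],ℝᵈ)}^{2α/(2α+1)} ‖f‖_α^{1/(2α+1)} }, where ‖f‖_∞ = sup_{t∈[τ₀,τ]} |f(t)| and ‖f‖_α is the α-Hölder seminorm of f on [τ₀,τ]. -/

import Mathlib

open Set MeasureTheory

private lemma keyLB {d : ℕ} (f : ℝ → EuclideanSpace ℝ (Fin d)) (τ₀ τ a b c : ℝ)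
    (hab : a ≤ b) (hsub : Icc a b ⊆ Icc τ₀ τ) (hc : 0 ≤ c)
    (hcont : ContinuousOn (fun s => ‖f s‖ ^ 2) (Icc τ₀ τ))
    (hlow : ∀ s ∈ Icc a b, c ≤ ‖f s‖) :
    c ^ 2 * (b - a) ≤ ∫ s in Icc τ₀ τ, ‖f s‖ ^ 2 := by
  have hint : IntegrableOn (fun s => ‖f s‖ ^ 2) (Icc τ₀ τ) := hcont.integrableOn_Icc
  have h1 : c ^ 2 * (b - a) = ∫ _s in Icc a b, c ^ 2 := by
    rw [setIntegral_const, Real.volume_real_Icc_of_le hab,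
      smul_eq_mul, mul_comm]
  rw [h1]
  have h2 : (∫ _s in Icc a b, c ^ 2) ≤ ∫ s in Icc a b, ‖f s‖ ^ 2 := by
    refine setIntegral_mono_on ?_ (hint.mono_set hsub) measurableSet_Icc ?_
    · exact integrableOn_const (by rw [Real.volume_Icc]; exact ENNReal.ofReal_ne_top)
    · intro x hx
      exact pow_le_pow_left₀ hc (hlow x hx) 2
  refine h2.trans (setIntegral_mono_set hint ?_ ?_)
  · filter_upwards with x
    positivity
  · exact HasSubset.Subset.eventuallyLE hsub

set_option maxHeartbeats 1000000 in
theorem stmt9 (d : ℕ) (α : ℝ) (hα : 0 < α) (hα1 : α < 1)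
    (τ₀ τ : ℝ) (hττ : τ₀ < τ)
    (f : ℝ → EuclideanSpace ℝ (Fin d)) (Cα : ℝ) (hCα : 0 ≤ Cα)
    (hf : ∀ s ∈ Icc τ₀ τ, ∀ t ∈ Icc τ₀ τ, ‖f t - f s‖ ≤ Cα * |t - s| ^ α) :
    ∀ t ∈ Icc τ₀ τ,
      ‖f t‖ ≤ 2 * Real.sqrt d *
        max ((τ - τ₀) ^ (-(1 / 2) : ℝ) *
              Real.sqrt (∫ s in Icc τ₀ τ, ‖f s‖ ^ 2))
            ((Real.sqrt (∫ s in Icc τ₀ τ, ‖f s‖ ^ 2)) ^ (2 * α / (2 * α + 1)) *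
              Cα ^ (1 / (2 * α + 1))) := by
  intro t ht
  have hαne : α ≠ 0 := ne_of_gt hα
  have hττ' : (0:ℝ) < τ - τ₀ := by linarith
  set L : ℝ := Real.sqrt (∫ s in Icc τ₀ τ, ‖f s‖ ^ 2) with hLdef
  have hL0 : 0 ≤ L := Real.sqrt_nonneg _
  have hI0 : 0 ≤ ∫ s in Icc τ₀ τ, ‖f s‖ ^ 2 :=
    setIntegral_nonneg measurableSet_Icc (fun x _ => by positivity)
  have hLsq : L ^ 2 = ∫ s in Icc τ₀ τ, ‖f s‖ ^ 2 := Real.sq_sqrt hI0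
  set A : ℝ := (τ - τ₀) ^ (-(1 / 2) : ℝ) * L with hAdef
  set B : ℝ := L ^ (2 * α / (2 * α + 1)) * Cα ^ (1 / (2 * α + 1)) with hBdef
  have hA0 : 0 ≤ A := mul_nonneg (Real.rpow_nonneg hττ'.le _) hL0
  have hB0 : 0 ≤ B := mul_nonneg (Real.rpow_nonneg hL0 _) (Real.rpow_nonneg hCα _)
  have hmax0 : 0 ≤ max A B := le_trans hA0 (le_max_left _ _)
  rcases Nat.eq_zero_or_pos d with hd | hd
  · subst hd
    have hft : f t = 0 := Subsingleton.elim _ _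
    rw [hft, norm_zero]
    have : (0:ℝ) ≤ 2 * Real.sqrt 0 := by positivity
    exact mul_nonneg (by positivity) hmax0
  have hsqd : (1:ℝ) ≤ Real.sqrt d := by
    rw [show (1:ℝ) = Real.sqrt 1 from Real.sqrt_one.symm]
    exact Real.sqrt_le_sqrt (by exact_mod_cast hd)
  -- it suffices to prove the bound without the √d factor
  suffices h : ‖f t‖ ≤ 2 * max A B by
    refine h.trans ?_
    calc 2 * max A B = 2 * 1 * max A B := by ring
      _ ≤ 2 * Real.sqrt d * max A B := by
          exact mul_le_mul_of_nonneg_right (by linarith) hmax0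
  set M : ℝ := ‖f t‖ with hMdef
  rcases eq_or_lt_of_le (norm_nonneg (f t)) with hM | hM
  · have hMz : M = 0 := hM.symm
    rw [hMz]
    linarith
  -- continuity of f on [τ₀, τ]
  have hcf : ContinuousOn f (Icc τ₀ τ) := by
    intro x hx
    rw [Metric.continuousWithinAt_iff]
    intro ε hε
    rcases eq_or_lt_of_le hCα with hC | hC
    · refine ⟨1, one_pos, fun {y} hy _ => ?_⟩
      have h1 := hf x hx y hy
      rw [← hC, zero_mul] at h1
      rw [dist_eq_norm]
      exact lt_of_le_of_lt h1 hε
    · refine ⟨(ε / (2 * Cα)) ^ (α⁻¹ : ℝ), Real.rpow_pos_of_pos (by positivity) _, fun {y} hy hyd => ?_⟩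
      have h1 := hf x hx y hy
      have h2 : |y - x| ^ α ≤ ((ε / (2 * Cα)) ^ (α⁻¹ : ℝ)) ^ α := by
        refine Real.rpow_le_rpow (abs_nonneg _) ?_ hα.le
        rw [Real.dist_eq] at hyd
        exact hyd.le
      rw [← Real.rpow_mul (by positivity), inv_mul_cancel₀ hαne, Real.rpow_one] at h2
      rw [dist_eq_norm]
      calc ‖f y - f x‖ ≤ Cα * |y - x| ^ α := h1
        _ ≤ Cα * (ε / (2 * Cα)) := by exact mul_le_mul_of_nonneg_left h2 hCα
        _ = ε / 2 := by field_simp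
        _ < ε := by linarith
  have hcont : ContinuousOn (fun s => ‖f s‖ ^ 2) (Icc τ₀ τ) := (hcf.norm).pow 2
  -- auxiliary: from c² (τ−τ₀) ≤ L² deduce c ≤ (τ−τ₀)^{-1/2} L
  have haux2 : ∀ c : ℝ, 0 ≤ c → c ^ 2 * (τ - τ₀) ≤ L ^ 2 →
      c ≤ (τ - τ₀) ^ (-(1 / 2) : ℝ) * L := by
    intro c hc hcl
    have hP : (0:ℝ) < (τ - τ₀) ^ (-(1 / 2) : ℝ) := Real.rpow_pos_of_pos hττ' _
    rw [← pow_le_pow_iff_left₀ hc (mul_nonneg hP.le hL0) two_ne_zero]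
    have hP2 : ((τ - τ₀) ^ (-(1 / 2) : ℝ)) ^ (2:ℕ) = (τ - τ₀)⁻¹ := by
      rw [← Real.rpow_natCast ((τ - τ₀) ^ (-(1 / 2) : ℝ)) 2, ← Real.rpow_mul hττ'.le]
      norm_num [Real.rpow_neg_one]
    rw [mul_pow, hP2]
    rw [inv_mul_eq_div, le_div_iff₀ hττ']
    exact hcl
  rcases eq_or_lt_of_le hCα with hC0 | hCpos
  -- case Cα = 0 : f is constant
  · have hconst : ∀ s ∈ Icc τ₀ τ, M ≤ ‖f s‖ := by
      intro s hs
      have h1 := hf s hs t ht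
      rw [← hC0, zero_mul] at h1
      have h2 : f t = f s := by
        rwa [← sub_eq_zero, ← norm_le_zero_iff]
      rw [hMdef, h2]
    have hkey := keyLB f τ₀ τ τ₀ τ M (le_of_lt hττ) (le_refl _) hM.le hcont hconst
    rw [← hLsq] at hkey
    have := haux2 M hM.le hkey
    calc M ≤ A := this
      _ ≤ max A B := le_max_left _ _
      _ ≤ 2 * max A B := by linarith
  -- case Cα > 0
  set δ : ℝ := (M / (2 * Cα)) ^ (α⁻¹ : ℝ) with hδdef
  have hδpos : 0 < δ := Real.rpow_pos_of_pos (by positivity) _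
  have hδα : δ ^ α = M / (2 * Cα) := by
    rw [hδdef, ← Real.rpow_mul (by positivity), inv_mul_cancel₀ hαne, Real.rpow_one]
  set ℓ : ℝ := min δ (τ - τ₀) with hℓdef
  have hℓpos : 0 < ℓ := lt_min hδpos hττ'
  have hℓδ : ℓ ≤ δ := min_le_left _ _
  have hℓτ : ℓ ≤ τ - τ₀ := min_le_right _ _
  set a : ℝ := max τ₀ (t - ℓ) with hadef
  set b : ℝ := min τ (t + ℓ) with hbdef
  have ha : τ₀ ≤ a := le_max_left _ _
  have hb : b ≤ τ := min_le_left _ _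
  have hat : a ≥ t - ℓ := le_max_right _ _
  have hbt : b ≤ t + ℓ := min_le_right _ _
  have hb1 : τ₀ + ℓ ≤ b := le_min (by linarith) (by linarith [ht.1])
  have hb2 : t ≤ b := le_min ht.2 (by linarith)
  have hba : a + ℓ ≤ b := by
    have h1 : a ≤ b - ℓ := max_le (by linarith) (by linarith)
    linarith
  have hab : a ≤ b := by linarith
  have hsub : Icc a b ⊆ Icc τ₀ τ := Icc_subset_Icc ha hb
  have hlow : ∀ s ∈ Icc a b, M / 2 ≤ ‖f s‖ := by
    intro s hs
    have hs' : s ∈ Icc τ₀ τ := hsub hs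
    have h1 : ‖f t - f s‖ ≤ Cα * |t - s| ^ α := hf s hs' t ht
    have hts : |t - s| ≤ δ := by
      rw [abs_le]
      constructor
      · have := hs.2
        linarith [hbt]
      · have := hs.1
        linarith [hat]
    have h2 : |t - s| ^ α ≤ δ ^ α := Real.rpow_le_rpow (abs_nonneg _) hts hα.le
    rw [hδα] at h2
    have h3 : ‖f t - f s‖ ≤ M / 2 := by
      calc ‖f t - f s‖ ≤ Cα * |t - s| ^ α := h1
        _ ≤ Cα * (M / (2 * Cα)) := mul_le_mul_of_nonneg_left h2 hCα
        _ = M / 2 := by field_simp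
    have h4 := norm_sub_norm_le (f t) (f s)
    rw [← hMdef] at h4
    linarith
  have hkey := keyLB f τ₀ τ a b (M / 2) hab hsub (by linarith) hcont hlow
  rw [← hLsq] at hkey
  have hkey2 : (M / 2) ^ 2 * ℓ ≤ L ^ 2 := by
    have h1 : (M / 2) ^ 2 * ℓ ≤ (M / 2) ^ 2 * (b - a) :=
      mul_le_mul_of_nonneg_left (by linarith) (sq_nonneg (M / 2))
    linarith
  rcases le_total δ (τ - τ₀) with hcase | hcase
  · -- ℓ = δ, conclude via the B term
    have hℓeq : ℓ = δ := min_eq_left hcase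
    rw [hℓeq] at hkey2
    set β : ℝ := 2 * α + 1 with hβdef
    have hβpos : (0:ℝ) < β := by rw [hβdef]; linarith
    -- raise to the power α
    have h2 : ((M / 2) ^ 2 * δ) ^ (α : ℝ) ≤ (L ^ 2) ^ (α : ℝ) :=
      Real.rpow_le_rpow (by positivity) hkey2 hα.le
    rw [Real.mul_rpow (by positivity) hδpos.le, hδα] at h2
    rw [← Real.rpow_natCast (M / 2) 2, ← Real.rpow_mul (by positivity)] at h2
    rw [← Real.rpow_natCast L 2, ← Real.rpow_mul hL0] at h2
    norm_num at h2
    -- h2 : (M / 2) ^ (2 * α) * (M / (2 * Cα)) ≤ L ^ (2 * α)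
    rw [Real.div_rpow hM.le (by norm_num : (0:ℝ) ≤ 2)] at h2
    set X : ℝ := M ^ (2 * α) with hXdef
    set Y : ℝ := L ^ (2 * α) with hYdef
    set T : ℝ := (2:ℝ) ^ (2 * α) with hTdef
    have hTpos : 0 < T := Real.rpow_pos_of_pos (by norm_num) _
    have hXpos : 0 < X := Real.rpow_pos_of_pos hM _
    have hY0 : 0 ≤ Y := Real.rpow_nonneg hL0 _
    rw [div_mul_div_comm, div_le_iff₀ (by positivity)] at h2
    -- h2 : X * M ≤ Y * (T * (2 * Cα))
    have h5 : M ^ β ≤ 2 ^ β * Cα * Y := by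
      have e1 : M ^ β = X * M := by
        rw [hβdef, hXdef, Real.rpow_add hM, Real.rpow_one]
      have e2 : (2:ℝ) ^ β = T * 2 := by
        rw [hβdef, hTdef, Real.rpow_add (by norm_num : (0:ℝ) < 2), Real.rpow_one]
      rw [e1, e2]
      calc X * M ≤ Y * (T * (2 * Cα)) := h2
        _ = T * 2 * Cα * Y := by ring
    have h6 : M ≤ (2 ^ β * Cα * Y) ^ (1 / β : ℝ) := by
      have e3 : M = (M ^ β) ^ (1 / β : ℝ) := by
        rw [← Real.rpow_mul hM.le, mul_one_div, div_self hβpos.ne', Real.rpow_one]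
      rw [e3]
      exact Real.rpow_le_rpow (Real.rpow_nonneg hM.le _) h5 (by positivity)
    have e4 : ((2:ℝ) ^ β * Cα * Y) ^ (1 / β : ℝ) = 2 * (L ^ (2 * α / β) * Cα ^ (1 / β : ℝ)) := by
      rw [Real.mul_rpow (by positivity) hY0, Real.mul_rpow (by positivity) hCα]
      rw [← Real.rpow_mul (by norm_num : (0:ℝ) ≤ 2), mul_one_div, div_self hβpos.ne',
        Real.rpow_one]
      rw [hYdef, ← Real.rpow_mul hL0, mul_one_div]
      ring
    rw [e4] at h6
    have hBeq : B = L ^ (2 * α / β) * Cα ^ (1 / β : ℝ) := by rw [hBdef, hβdef]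
    calc M ≤ 2 * B := by rw [hBeq]; exact h6
      _ ≤ 2 * max A B := mul_le_mul_of_nonneg_left (le_max_right A B) (by norm_num)
  · -- ℓ = τ − τ₀, conclude via the A term
    have hℓeq : ℓ = τ - τ₀ := min_eq_right hcase
    rw [hℓeq] at hkey2
    have := haux2 (M / 2) (by linarith) hkey2
    have hA : M ≤ 2 * A := by rw [hAdef]; linarith
    calc M ≤ 2 * A := hA
      _ ≤ 2 * max A B := mul_le_mul_of_nonneg_left (le_max_left A B) (by norm_num)
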